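/- Every minor minimal non-apex graph has minimum vertex degree at least 3. -/

import Mathlib

open SimpleGraph

/-- `H` is a minor of `G`: there is an assignment of (some) vertices of `G` to
branch sets, one nonempty connected branch set for each vertex of `H`, such that
every edge of `H` is realized by an edge of `G` between the corresponding branch sets. -/
def IsMinor {V W : Type} (H : SimpleGraph W) (G : SimpleGraph V) : Prop :=
  ∃ f : V → Option W,
    (∀ w : W, ∃ v, f v = some w) ∧
    (∀ w : W, (G.induce {v | f v = some w}).Connected) ∧
    (∀ w₁ w₂ : W, H.Adj w₁ w₂ →
      ∃ v₁ v₂, f v₁ = some w₁ ∧ f v₂ = some w₂ ∧ G.Adj v₁ v₂)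

/-- Planarity via Wagner's theorem: no `K₅` minor and no `K₃,₃` minor. -/
def IsPlanar {V : Type} (G : SimpleGraph V) : Prop :=
  ¬ IsMinor (completeGraph (Fin 5)) G ∧
    ¬ IsMinor (completeBipartiteGraph (Fin 3) (Fin 3)) G

/-- A graph is apex if deleting some vertex leaves a planar graph. -/
def IsApex {V : Type} (G : SimpleGraph V) : Prop :=
  ∃ v : V, IsPlanar (G.induce {u | u ≠ v})

/-- Minor minimal non-apex: not apex, but every proper minor is apex. -/
def IsMMNA {V : Type} (G : SimpleGraph V) : Prop :=
  ¬ IsApex G ∧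
    ∀ (W : Type) (H : SimpleGraph W), IsMinor H G → ¬ IsMinor G H → IsApex H

/-- The degree of a vertex, as the cardinality of its neighbor set. -/
noncomputable def vdeg {V : Type} (G : SimpleGraph V) (v : V) : ℕ :=
  (G.neighborSet v).ncard

/-- Edge list of the icosahedral graph on 12 vertices. -/
def icList : List (Fin 12 × Fin 12) :=
  [(0,1),(0,2),(0,3),(0,4),(0,5),
   (1,2),(2,3),(3,4),(4,5),(5,1),
   (11,6),(11,7),(11,8),(11,9),(11,10),
   (6,7),(7,8),(8,9),(9,10),(10,6),
   (1,6),(1,7),(2,7),(2,8),(3,8),(3,9),(4,9),(4,10),(5,10),(5,6)]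

/-- The icosahedral graph `Ic`. -/
def Ic : SimpleGraph (Fin 12) := SimpleGraph.fromRel (fun a b => (a, b) ∈ icList)

/-- The join `K₁ ∗ Ic`: a cone over the icosahedral graph. -/
def ConeIc : SimpleGraph (Unit ⊕ Fin 12) :=
  SimpleGraph.fromRel (fun a b =>
    a = Sum.inl () ∨ b = Sum.inl () ∨ ∃ x y, a = Sum.inr x ∧ b = Sum.inr y ∧ Ic.Adj x y)

/-- contraction of `v` into `u`, on the vertex set `V \ {v}` -/
def MyContract {V : Type} (G : SimpleGraph V) (v u : V) : SimpleGraph {x : V // x ≠ v} where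
  Adj p q := p ≠ q ∧ (G.Adj ↑p ↑q ∨ ((p : V) = u ∧ G.Adj v ↑q) ∨ ((q : V) = u ∧ G.Adj v ↑p))
  symm := by
    constructor
    rintro p q ⟨h1, h2 | ⟨h3, h4⟩ | ⟨h3, h4⟩⟩
    · exact ⟨h1.symm, Or.inl h2.symm⟩
    · exact ⟨h1.symm, Or.inr (Or.inr ⟨h3, h4⟩)⟩
    · exact ⟨h1.symm, Or.inr (Or.inl ⟨h3, h4⟩)⟩
  loopless := ⟨fun p h => h.1 rfl⟩

def piMap {V : Type} {v : V} (a : {x : V // x ≠ v}) (b : ↥({b : {x : V // x ≠ v} | b ≠ a})) :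
    ↥({x : V | x ≠ (a : V)}) :=
  ⟨((b : {x : V // x ≠ v}) : V), fun h => b.2 (Subtype.ext h)⟩

def rhoMap {V : Type} {v : V} (a : {x : V // x ≠ v}) (x : ↥({x : V | x ≠ (a : V)}))
    (hx : (x : V) ≠ v) : ↥({b : {x : V // x ≠ v} | b ≠ a}) :=
  ⟨⟨(x : V), hx⟩, fun h => x.2 (congrArg Subtype.val h)⟩

lemma pi_rho {V : Type} {v : V} (a : {x : V // x ≠ v}) (x : ↥({x : V | x ≠ (a : V)}))
    (hx : (x : V) ≠ v) : piMap a (rhoMap a x hx) = x := Subtype.ext rfl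

lemma key {V : Type} {κ : Type} {K : SimpleGraph κ}
    (hK : ∀ k : κ, ∃ k₁ k₂ k₃, k₁ ≠ k₂ ∧ k₁ ≠ k₃ ∧ k₂ ≠ k₃ ∧
      K.Adj k k₁ ∧ K.Adj k k₂ ∧ K.Adj k k₃)
    (G : SimpleGraph V) (v u : V)
    (hADJ : ∀ y, G.Adj v y → G.Adj v u)
    (h3 : ∀ y₁ y₂ y₃, G.Adj v y₁ → G.Adj v y₂ → G.Adj v y₃ → y₁ = y₂ ∨ y₁ = y₃ ∨ y₂ = y₃)
    (a : {x : V // x ≠ v})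
    (hm : IsMinor K (G.induce {x | x ≠ (a : V)})) :
    IsMinor K ((MyContract G v u).induce {b | b ≠ a}) := by
  classical
  obtain ⟨f, h1, h2, h3e⟩ := hm
  -- no block is the singleton {v}
  have hns : ∀ k : κ, ∃ x : ↥({x : V | x ≠ (a : V)}), f x = some k ∧ (x : V) ≠ v := by
    intro k
    obtain ⟨x, hx⟩ := h1 k
    by_cases hxv : (x : V) = v
    · by_contra hcon
      push_neg at hcon
      obtain ⟨k₁, k₂, k₃, n12, n13, n23, a1, a2, a3⟩ := hK k
      obtain ⟨p₁, q₁, hp₁, hq₁, hadj₁⟩ := h3e k k₁ a1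
      obtain ⟨p₂, q₂, hp₂, hq₂, hadj₂⟩ := h3e k k₂ a2
      obtain ⟨p₃, q₃, hp₃, hq₃, hadj₃⟩ := h3e k k₃ a3
      have e₁ : G.Adj v ↑q₁ := by
        have hA : G.Adj ↑p₁ ↑q₁ := hadj₁
        rwa [hcon p₁ hp₁] at hA
      have e₂ : G.Adj v ↑q₂ := by
        have hA : G.Adj ↑p₂ ↑q₂ := hadj₂
        rwa [hcon p₂ hp₂] at hA
      have e₃ : G.Adj v ↑q₃ := by
        have hA : G.Adj ↑p₃ ↑q₃ := hadj₃
        rwa [hcon p₃ hp₃] at hA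
      have d12 : (q₁ : V) ≠ (q₂ : V) := by
        intro hh; apply n12
        have hq : q₁ = q₂ := Subtype.ext hh
        rw [hq, hq₂] at hq₁; exact (Option.some.inj hq₁).symm
      have d13 : (q₁ : V) ≠ (q₃ : V) := by
        intro hh; apply n13
        have hq : q₁ = q₃ := Subtype.ext hh
        rw [hq, hq₃] at hq₁; exact (Option.some.inj hq₁).symm
      have d23 : (q₂ : V) ≠ (q₃ : V) := by
        intro hh; apply n23
        have hq : q₂ = q₃ := Subtype.ext hh
        rw [hq, hq₃] at hq₂; exact (Option.some.inj hq₂).symm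
      rcases h3 _ _ _ e₁ e₂ e₃ with hh | hh | hh
      exacts [d12 hh, d13 hh, d23 hh]
    · exact ⟨x, hx, hxv⟩
  -- if a block contains a `v`-element it has a neighbor of `v` in it
  have hz : ∀ (k : κ) (x₀ : ↥({x : V | x ≠ (a : V)})), f x₀ = some k → (x₀ : V) = v →
      ∃ z : ↥({x : V | x ≠ (a : V)}), f z = some k ∧ (z : V) ≠ v ∧ G.Adj v ↑z := by
    intro k x₀ hx₀ hx₀v
    obtain ⟨y₀, hy₀, hy₀v⟩ := hns k
    have hxy : x₀ ≠ y₀ := fun hh => hy₀v (by rw [← hh]; exact hx₀v)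
    have hr := (h2 k).preconnected ⟨x₀, hx₀⟩ ⟨y₀, hy₀⟩
    obtain ⟨p⟩ := hr
    have hfirst : ∀ (s t : ↥({x : ↥({x : V | x ≠ (a : V)}) | f x = some k}))
        (_ : ((G.induce {x : V | x ≠ (a : V)}).induce {x | f x = some k}).Walk s t), s ≠ t →
        ∃ b : ↥({x : ↥({x : V | x ≠ (a : V)}) | f x = some k}),
          ((G.induce {x : V | x ≠ (a : V)}).induce {x | f x = some k}).Adj s b := by
      intro s t p hst
      cases p with
      | nil => exact absurd rfl hst
      | cons hadj q => exact ⟨_, hadj⟩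
    obtain ⟨b, hadj⟩ := hfirst ⟨x₀, hx₀⟩ ⟨y₀, hy₀⟩ p
      (fun hh => hxy (Subtype.ext_iff.mp hh))
    have hGA : G.Adj (x₀ : V) (((b : ↥({x : ↥({x : V | x ≠ (a : V)}) | f x = some k})) :
        ↥({x : V | x ≠ (a : V)})) : V) := hadj
    rw [hx₀v] at hGA
    exact ⟨↑b, b.2, fun hh => hGA.ne hh.symm, hGA⟩
  refine ⟨fun b => f (piMap a b), ?_, ?_, ?_⟩
  · -- surjectivity
    intro k
    obtain ⟨x, hx, hxv⟩ := hns k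
    exact ⟨rhoMap a x hxv, by show f (piMap a (rhoMap a _ _)) = some _; rw [pi_rho]; exact hx⟩
  · -- connectivity of blocks
    intro k
    have hc₀ : Nonempty ↥({b : ↥({b : {x : V // x ≠ v} | b ≠ a}) | f (piMap a b) = some k}) := by
      obtain ⟨x, hx, hxv⟩ := hns k
      exact ⟨⟨rhoMap a x hxv, show f (piMap a (rhoMap a x hxv)) = some k by
        rw [pi_rho]; exact hx⟩⟩
    obtain ⟨zc, hzc⟩ : ∃ zc : ↥({b : ↥({b : {x : V // x ≠ v} | b ≠ a}) | f (piMap a b) = some k}),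
        ∀ x : ↥({x : V | x ≠ (a : V)}), f x = some k → (x : V) = v →
          G.Adj v ((((zc : ↥({b : {x : V // x ≠ v} | b ≠ a})) : {x : V // x ≠ v})) : V) := by
      by_cases hvB : ∃ x : ↥({x : V | x ≠ (a : V)}), f x = some k ∧ (x : V) = v
      · obtain ⟨x₀, hx₀, hx₀v⟩ := hvB
        obtain ⟨z, hzk, hzv, hzadj⟩ := hz k x₀ hx₀ hx₀v
        exact ⟨⟨rhoMap a z hzv, show f (piMap a (rhoMap a z hzv)) = some k by
          rw [pi_rho]; exact hzk⟩, fun x hx hxv => hzadj⟩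
      · obtain ⟨c₀⟩ := hc₀
        exact ⟨c₀, fun x hx hxv => absurd ⟨x, hx, hxv⟩ hvB⟩
    set Gi := (G.induce {x : V | x ≠ (a : V)}).induce {x | f x = some k} with hGi
    set Hi := ((MyContract G v u).induce {b | b ≠ a}).induce
      {b : ↥({b : {x : V // x ≠ v} | b ≠ a}) | f (piMap a b) = some k} with hHi
    let φ : ↥({x : ↥({x : V | x ≠ (a : V)}) | f x = some k}) →
        ↥({b : ↥({b : {x : V // x ≠ v} | b ≠ a}) | f (piMap a b) = some k}) := fun x =>
      if hxv : ((x : ↥({x : V | x ≠ (a : V)})) : V) = v then zc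
      else ⟨rhoMap a ↑x hxv, show f (piMap a (rhoMap a (↑x) hxv)) = some k by
        rw [pi_rho]; exact x.2⟩
    let ψ : ↥({b : ↥({b : {x : V // x ≠ v} | b ≠ a}) | f (piMap a b) = some k}) →
        ↥({x : ↥({x : V | x ≠ (a : V)}) | f x = some k}) := fun c => ⟨piMap a ↑c, c.2⟩
    have hφψ : ∀ c, φ (ψ c) = c := by
      intro c
      have hcv : ((piMap a (c : ↥({b : {x : V // x ≠ v} | b ≠ a}))) : V) ≠ v :=
        ((c : ↥({b : {x : V // x ≠ v} | b ≠ a})) : {x : V // x ≠ v}).2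
      show dite _ _ _ = c
      rw [dif_neg hcv]
      exact Subtype.ext (Subtype.ext (Subtype.ext rfl))
    have hstep : ∀ x y : ↥({x : ↥({x : V | x ≠ (a : V)}) | f x = some k}),
        Gi.Adj x y → Hi.Reachable (φ x) (φ y) := by
      intro x y hxy
      have hG : G.Adj ((x : ↥({x : V | x ≠ (a : V)})) : V) ((y : ↥({x : V | x ≠ (a : V)})) : V) :=
        hxy
      by_cases hxv : ((x : ↥({x : V | x ≠ (a : V)})) : V) = v
      · have hyv : ((y : ↥({x : V | x ≠ (a : V)})) : V) ≠ v := by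
          intro hh; rw [hxv, hh] at hG; exact hG.ne rfl
        have hvy : G.Adj v ((y : ↥({x : V | x ≠ (a : V)})) : V) := by rwa [hxv] at hG
        have hzadj := hzc ↑x x.2 hxv
        have hφx : φ x = zc := dif_pos hxv
        have hφy : φ y = ⟨rhoMap a ↑y hyv, by show f (piMap a (rhoMap a _ _)) = some _; rw [pi_rho]; exact y.2⟩ := dif_neg hyv
        rw [hφx, hφy]
        by_cases heq : ((((zc : ↥({b : {x : V // x ≠ v} | b ≠ a})) : {x : V // x ≠ v})) : V)
            = ((y : ↥({x : V | x ≠ (a : V)})) : V)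
        · have hee : zc = ⟨rhoMap a ↑y hyv, by show f (piMap a (rhoMap a _ _)) = some _; rw [pi_rho]; exact y.2⟩ :=
            Subtype.ext (Subtype.ext (Subtype.ext heq))
          rw [hee]
        · have hu' : ((((zc : ↥({b : {x : V // x ≠ v} | b ≠ a})) : {x : V // x ≠ v})) : V) = u ∨
              ((y : ↥({x : V | x ≠ (a : V)})) : V) = u := by
            rcases h3 _ _ _ hzadj hvy (hADJ _ hvy) with hh | hh | hh
            exacts [absurd hh heq, Or.inl hh, Or.inr hh]
          apply Adj.reachable
          show (MyContract G v u).Adj _ _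
          refine ⟨fun hh => heq (Subtype.ext_iff.mp hh), Or.inr ?_⟩
          rcases hu' with hh | hh
          · exact Or.inl ⟨hh, hvy⟩
          · exact Or.inr ⟨hh, hzadj⟩
      · by_cases hyv : ((y : ↥({x : V | x ≠ (a : V)})) : V) = v
        · have hvx : G.Adj v ((x : ↥({x : V | x ≠ (a : V)})) : V) := by
            rw [hyv] at hG; exact hG.symm
          have hzadj := hzc ↑y y.2 hyv
          have hφy : φ y = zc := dif_pos hyv
          have hφx : φ x = ⟨rhoMap a ↑x hxv, by show f (piMap a (rhoMap a _ _)) = some _; rw [pi_rho]; exact x.2⟩ := dif_neg hxv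
          rw [hφx, hφy]
          by_cases heq : ((((zc : ↥({b : {x : V // x ≠ v} | b ≠ a})) : {x : V // x ≠ v})) : V)
              = ((x : ↥({x : V | x ≠ (a : V)})) : V)
          · have hee : zc = ⟨rhoMap a ↑x hxv, by show f (piMap a (rhoMap a _ _)) = some _; rw [pi_rho]; exact x.2⟩ :=
              Subtype.ext (Subtype.ext (Subtype.ext heq))
            rw [← hee]
          · have hu' : ((((zc : ↥({b : {x : V // x ≠ v} | b ≠ a})) : {x : V // x ≠ v})) : V) = u ∨
                ((x : ↥({x : V | x ≠ (a : V)})) : V) = u := by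
              rcases h3 _ _ _ hzadj hvx (hADJ _ hvx) with hh | hh | hh
              exacts [absurd hh heq, Or.inl hh, Or.inr hh]
            apply Adj.reachable
            show (MyContract G v u).Adj _ _
            refine ⟨fun hh => heq (Subtype.ext_iff.mp hh).symm, Or.inr ?_⟩
            rcases hu' with hh | hh
            · exact Or.inr ⟨hh, hvx⟩
            · exact Or.inl ⟨hh, hzadj⟩
        · have hφx : φ x = ⟨rhoMap a ↑x hxv, by show f (piMap a (rhoMap a _ _)) = some _; rw [pi_rho]; exact x.2⟩ := dif_neg hxv
          have hφy : φ y = ⟨rhoMap a ↑y hyv, by show f (piMap a (rhoMap a _ _)) = some _; rw [pi_rho]; exact y.2⟩ := dif_neg hyv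
          rw [hφx, hφy]
          apply Adj.reachable
          show (MyContract G v u).Adj _ _
          exact ⟨fun hh => hG.ne (congrArg (fun (t : {x : V // x ≠ v}) => (t : V)) hh), Or.inl hG⟩
    have hwalk : ∀ (x y : ↥({x : ↥({x : V | x ≠ (a : V)}) | f x = some k}))
        (p : Gi.Walk x y), Hi.Reachable (φ x) (φ y) := by
      intro x y p
      induction p with
      | nil => exact Reachable.refl _
      | cons hh p ih => exact (hstep _ _ hh).trans ih
    rw [connected_iff]
    refine ⟨fun c₁ c₂ => ?_, hc₀⟩
    obtain ⟨p⟩ := (h2 k).preconnected (ψ c₁) (ψ c₂)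
    have hrr := hwalk (ψ c₁) (ψ c₂) p
    rwa [hφψ, hφψ] at hrr
  · -- edges
    intro k₁ k₂ hk
    obtain ⟨x₁, x₂, hx₁, hx₂, hadj⟩ := h3e k₁ k₂ hk
    have hG : G.Adj (x₁ : V) (x₂ : V) := hadj
    have hkne : k₁ ≠ k₂ := hk.ne
    by_cases h1v : (x₁ : V) = v
    · have h2v : (x₂ : V) ≠ v := by
        intro hh; rw [h1v, hh] at hG; exact hG.ne rfl
      obtain ⟨z, hzk, hzv, hzadj⟩ := hz k₁ x₁ hx₁ h1v
      have hvx₂ : G.Adj v (x₂ : V) := by rwa [h1v] at hG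
      have hne : (z : V) ≠ (x₂ : V) := by
        intro hh; apply hkne
        have hq : z = x₂ := Subtype.ext hh
        rw [hq, hx₂] at hzk; exact Option.some.inj hzk.symm
      have hu' : (z : V) = u ∨ (x₂ : V) = u := by
        rcases h3 _ _ _ hzadj hvx₂ (hADJ _ hzadj) with hh | hh | hh
        exacts [absurd hh hne, Or.inl hh, Or.inr hh]
      refine ⟨rhoMap a z hzv, rhoMap a x₂ h2v, by show f (piMap a (rhoMap a _ _)) = some _; rw [pi_rho]; exact hzk,
        by show f (piMap a (rhoMap a _ _)) = some _; rw [pi_rho]; exact hx₂, ?_⟩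
      show (MyContract G v u).Adj _ _
      refine ⟨fun hh => hne (congrArg (fun (t : {x : V // x ≠ v}) => (t : V)) hh), Or.inr ?_⟩
      rcases hu' with hh | hh
      · exact Or.inl ⟨hh, hvx₂⟩
      · exact Or.inr ⟨hh, hzadj⟩
    · by_cases h2v : (x₂ : V) = v
      · obtain ⟨z, hzk, hzv, hzadj⟩ := hz k₂ x₂ hx₂ h2v
        have hvx₁ : G.Adj v (x₁ : V) := by rw [h2v] at hG; exact hG.symm
        have hne : (x₁ : V) ≠ (z : V) := by
          intro hh; apply hkne
          have hq : x₁ = z := Subtype.ext hh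
          rw [hq, hzk] at hx₁; exact Option.some.inj hx₁.symm
        have hu' : (x₁ : V) = u ∨ (z : V) = u := by
          rcases h3 _ _ _ hvx₁ hzadj (hADJ _ hzadj) with hh | hh | hh
          exacts [absurd hh hne, Or.inl hh, Or.inr hh]
        refine ⟨rhoMap a x₁ h1v, rhoMap a z hzv, by show f (piMap a (rhoMap a _ _)) = some _; rw [pi_rho]; exact hx₁,
          by show f (piMap a (rhoMap a _ _)) = some _; rw [pi_rho]; exact hzk, ?_⟩
        show (MyContract G v u).Adj _ _
        refine ⟨fun hh => hne (congrArg (fun (t : {x : V // x ≠ v}) => (t : V)) hh), Or.inr ?_⟩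
        rcases hu' with hh | hh
        · exact Or.inl ⟨hh, hzadj⟩
        · exact Or.inr ⟨hh, hvx₁⟩
      · refine ⟨rhoMap a x₁ h1v, rhoMap a x₂ h2v, by show f (piMap a (rhoMap a _ _)) = some _; rw [pi_rho]; exact hx₁,
          by show f (piMap a (rhoMap a _ _)) = some _; rw [pi_rho]; exact hx₂, ?_⟩
        show (MyContract G v u).Adj _ _
        exact ⟨fun hh => hG.ne (congrArg (fun (t : {x : V // x ≠ v}) => (t : V)) hh), Or.inl hG⟩

/-- Every minor minimal non-apex graph has minimum vertex degree at least 3. -/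
theorem stmt_2 {V : Type} [Fintype V] (G : SimpleGraph V) (h : IsMMNA G) :
    ∀ v : V, 3 ≤ vdeg G v := by
  classical
  by_contra hcon
  push_neg at hcon
  obtain ⟨v, hv⟩ := hcon
  have h3 : ∀ y₁ y₂ y₃, G.Adj v y₁ → G.Adj v y₂ → G.Adj v y₃ →
      y₁ = y₂ ∨ y₁ = y₃ ∨ y₂ = y₃ := by
    intro y₁ y₂ y₃ a1 a2 a3
    by_contra hne
    push_neg at hne
    obtain ⟨n12, n13, n23⟩ := hne
    have hsub : ({y₁, y₂, y₃} : Set V) ⊆ G.neighborSet v := by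
      rintro x (rfl | rfl | rfl) <;> assumption
    have h33 : ({y₁, y₂, y₃} : Set V).ncard = 3 := by
      rw [Set.ncard_insert_of_notMem (by simp [n12, n13]) (Set.toFinite _),
        Set.ncard_pair n23]
    have hle := Set.ncard_le_ncard hsub (Set.toFinite _)
    unfold vdeg at hv
    omega
  have hK5 : ∀ k : Fin 5, ∃ k₁ k₂ k₃, k₁ ≠ k₂ ∧ k₁ ≠ k₃ ∧ k₂ ≠ k₃ ∧
      (completeGraph (Fin 5)).Adj k k₁ ∧ (completeGraph (Fin 5)).Adj k k₂ ∧
      (completeGraph (Fin 5)).Adj k k₃ := by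
    simp only [completeGraph, top_adj]; decide
  have hK33 : ∀ k : Fin 3 ⊕ Fin 3, ∃ k₁ k₂ k₃, k₁ ≠ k₂ ∧ k₁ ≠ k₃ ∧ k₂ ≠ k₃ ∧
      (completeBipartiteGraph (Fin 3) (Fin 3)).Adj k k₁ ∧
      (completeBipartiteGraph (Fin 3) (Fin 3)).Adj k k₂ ∧
      (completeBipartiteGraph (Fin 3) (Fin 3)).Adj k k₃ := by
    simp only [completeBipartiteGraph]; decide
  by_cases hVu : ∃ u : V, u ≠ v
  · obtain ⟨u₀, hu₀⟩ := hVu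
    obtain ⟨u, huv, hADJ⟩ : ∃ u : V, u ≠ v ∧ ∀ y, G.Adj v y → G.Adj v u := by
      by_cases hn : ∃ y, G.Adj v y
      · obtain ⟨y, hy⟩ := hn
        exact ⟨y, fun hh => hy.ne hh.symm, fun _ _ => hy⟩
      · push_neg at hn
        exact ⟨u₀, hu₀, fun y hy => absurd hy (hn y)⟩
    -- the contraction is a minor of G
    have hfm : ∀ (x : V) (w : {x : V // x ≠ v}),
        (if hx : x = v then (if G.Adj v u then some (⟨u, huv⟩ : {x : V // x ≠ v}) else none)
          else some ⟨x, hx⟩) = some w ↔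
        ((x ≠ v ∧ x = ↑w) ∨ (x = v ∧ G.Adj v u ∧ (w : V) = u)) := by
      intro x w
      by_cases hx : x = v
      · subst hx
        rw [dif_pos rfl]
        by_cases hadj : G.Adj x u
        · rw [if_pos hadj]
          simp [Option.some.injEq, Subtype.ext_iff, hadj, eq_comm]
        · rw [if_neg hadj]
          simp [hadj]
      · rw [dif_neg hx]
        simp [Option.some.injEq, Subtype.ext_iff, hx]
    have hmin : IsMinor (MyContract G v u) G := by
      refine ⟨fun x => if hx : x = v then
          (if G.Adj v u then some (⟨u, huv⟩ : {x : V // x ≠ v}) else none)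
          else some ⟨x, hx⟩, ?_, ?_, ?_⟩
      · intro w
        exact ⟨↑w, (hfm _ _).mpr (Or.inl ⟨w.2, rfl⟩)⟩
      · intro w
        rw [connected_iff]
        refine ⟨fun p q => ?_, ⟨⟨↑w, (hfm _ _).mpr (Or.inl ⟨w.2, rfl⟩)⟩⟩⟩
        rcases (hfm ↑p w).mp p.2 with ⟨-, hp⟩ | ⟨hp, hadj, hwu⟩ <;>
          rcases (hfm ↑q w).mp q.2 with ⟨-, hq⟩ | ⟨hq, hadj', hwu'⟩
        · have hpq : p = q := Subtype.ext (hp.trans hq.symm)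
          rw [hpq]
        · apply Adj.reachable
          show G.Adj (p : V) (q : V)
          rw [hp, hq]
          rw [← hwu'] at hadj'
          exact hadj'.symm
        · apply Adj.reachable
          show G.Adj (p : V) (q : V)
          rw [hp, hq]
          rw [← hwu] at hadj
          exact hadj
        · have hpq : p = q := Subtype.ext (hp.trans hq.symm)
          rw [hpq]
      · rintro w₁ w₂ ⟨hne, hG | ⟨hpu, hadj⟩ | ⟨hqu, hadj⟩⟩
        · exact ⟨↑w₁, ↑w₂, (hfm _ _).mpr (Or.inl ⟨w₁.2, rfl⟩),
            (hfm _ _).mpr (Or.inl ⟨w₂.2, rfl⟩), hG⟩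
        · exact ⟨v, ↑w₂, (hfm _ _).mpr (Or.inr ⟨rfl, hADJ _ hadj, hpu⟩),
            (hfm _ _).mpr (Or.inl ⟨w₂.2, rfl⟩), hadj⟩
        · exact ⟨↑w₁, v, (hfm _ _).mpr (Or.inl ⟨w₁.2, rfl⟩),
            (hfm _ _).mpr (Or.inr ⟨rfl, hADJ _ hadj, hqu⟩), hadj.symm⟩
    have hnotmin : ¬ IsMinor G (MyContract G v u) := by
      rintro ⟨f, h1, -, -⟩
      choose g hg using h1
      have hinj : Function.Injective g := fun a b hab =>
        Option.some_injective _ ((hg a).symm.trans ((congrArg f hab).trans (hg b)))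
      have hcard : Fintype.card {x : V // x ≠ v} < Fintype.card V :=
        Fintype.card_subtype_lt (x := v) (by simp)
      have := Fintype.card_le_of_injective g hinj
      omega
    obtain ⟨a, hap⟩ := h.2 _ (MyContract G v u) hmin hnotmin
    exact h.1 ⟨↑a, fun hm5 => hap.1 (key hK5 G v u hADJ h3 a hm5),
      fun hm33 => hap.2 (key hK33 G v u hADJ h3 a hm33)⟩
  · push_neg at hVu
    apply h.1
    refine ⟨v, ?_, ?_⟩
    · rintro ⟨f, h1, -, -⟩
      obtain ⟨x, -⟩ := h1 0
      exact x.2 (hVu ↑x)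
    · rintro ⟨f, h1, -, -⟩
      obtain ⟨x, -⟩ := h1 (Sum.inl 0)
      exact x.2 (hVu ↑x)
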